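/- arXiv:1502.07588 — 3 statements merged into one kernel-verified Lean document; each statement's English description precedes it below -/
import Mathlib

section
/- Let f : SL_2(C) → C be holomorphic and satisfy H++ · f = 0, where H++ is the left-invariant vector field u^i_+ ∂/∂u^i_-. Then f is the restriction to SL_2(C) of a holomorphic function on GL_2(C) of the form h = Σ_{n,m ≥ 0} c_{nm} (u^1_+)^n (u^2_+)^m, i.e. f depends only on the first column of U, holomorphically. -/
open Matrix

noncomputable section

attribute [local instance] Matrix.normedAddCommGroup Matrix.normedSpace

/-- SL₂(ℂ) as a subset of the 2×2 complex matrices. -/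
def SL2 : Set (Matrix (Fin 2) (Fin 2) ℂ) := {U | U.det = 1}

/-- A function is holomorphic on SL₂(ℂ) iff it is holomorphic on an open neighbourhood of
SL₂(ℂ) in the matrix space (SL₂(ℂ) is a closed Stein submanifold, so this is equivalent to
intrinsic holomorphy). -/
def HolSL2 (f : Matrix (Fin 2) (Fin 2) ℂ → ℂ) : Prop :=
  ∃ Ω : Set (Matrix (Fin 2) (Fin 2) ℂ), IsOpen Ω ∧ SL2 ⊆ Ω ∧ DifferentiableOn ℂ f Ω

/-- Directional derivative of f along the left-invariant vector field corresponding to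
X ∈ sl₂(ℂ), at the point U: (X·f)(U) = df_U(U·X). -/
def lieD (X : Matrix (Fin 2) (Fin 2) ℂ) (f : Matrix (Fin 2) (Fin 2) ℂ → ℂ)
    (U : Matrix (Fin 2) (Fin 2) ℂ) : ℂ := fderiv ℂ f U (U * X)

def H0m : Matrix (Fin 2) (Fin 2) ℂ := !![1, 0; 0, -1]
def Hppm : Matrix (Fin 2) (Fin 2) ℂ := !![0, 1; 0, 0]
def Hmmm : Matrix (Fin 2) (Fin 2) ℂ := !![0, 0; 1, 0]

/- STATEMENT 7: If f is holomorphic on SL₂(ℂ) and H₊₊·f = 0, then f is the restriction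
of an everywhere-convergent power series Σ_{n,m ≥ 0} c_{nm} (u¹₊)ⁿ (u²₊)^m in the entries
of the first column of U: f depends only (and holomorphically) on the first column. -/

open Complex Metric

/-- Taylor coefficient at 0 (radius-1 Cauchy power series coefficient). -/
def tCoeff (h : ℂ → ℂ) (n : ℕ) : ℂ := cauchyPowerSeries h 0 1 n (fun _ => 1)

lemma cps_apply (h : ℂ → ℂ) (ctr : ℂ) (R : ℝ) (n : ℕ) (w : ℂ) :
    (cauchyPowerSeries h ctr R n fun _ => w)
      = w ^ n * (cauchyPowerSeries h ctr R n fun _ => 1) := by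
  simp [cauchyPowerSeries, ContinuousMultilinearMap.mkPiRing_apply, Finset.prod_const,
    smul_eq_mul]

lemma cps_radius_indep {h : ℂ → ℂ} (hh : Differentiable ℂ h) {R : NNReal} (hR : 0 < R) :
    cauchyPowerSeries h 0 R = cauchyPowerSeries h 0 1 :=
  ((hh.hasFPowerSeriesOnBall 0 hR).hasFPowerSeriesAt).eq_formalMultilinearSeries
    ((hh.hasFPowerSeriesOnBall 0 one_pos).hasFPowerSeriesAt)

lemma entire_hasSum {h : ℂ → ℂ} (hh : Differentiable ℂ h) (b : ℂ) :
    HasSum (fun n => tCoeff h n * b ^ n) (h b) := by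
  have H := (hh.hasFPowerSeriesOnBall 0 one_pos).hasSum (y := b)
    (by simp [EMetric.mem_ball])
  simp only [zero_add] at H
  have e : ∀ n : ℕ, (cauchyPowerSeries h 0 ((1:NNReal):ℝ) n fun _ => b)
      = tCoeff h n * b ^ n := by
    intro n
    rw [show ((1:NNReal):ℝ) = (1:ℝ) by norm_num, cps_apply]
    unfold tCoeff; ring
  exact HasSum.congr_fun H fun n => (e n).symm ▸ rfl

lemma norm_cps_le {h : ℂ → ℂ} {ctr : ℂ} {R M : ℝ} (hR : 0 < R)
    (hc : Continuous fun θ : ℝ => h (circleMap ctr R θ))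
    (hM : ∀ z ∈ sphere ctr R, ‖h z‖ ≤ M) (n : ℕ) :
    ‖cauchyPowerSeries h ctr R n‖ ≤ M / R ^ n := by
  refine (norm_cauchyPowerSeries_le h ctr R n).trans ?_
  have hint : (∫ θ : ℝ in (0)..2 * Real.pi, ‖h (circleMap ctr R θ)‖)
      ≤ ∫ _ : ℝ in (0)..2 * Real.pi, M := by
    apply intervalIntegral.integral_mono_on Real.two_pi_pos.le
      (hc.norm.intervalIntegrable _ _) (intervalIntegrable_const)
    intro θ _
    exact hM _ (circleMap_mem_sphere ctr hR.le θ)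
  have h2 : (∫ _ : ℝ in (0)..2 * Real.pi, M) = 2 * Real.pi * M := by
    simp [mul_comm]
  have hRabs : |R| = R := abs_of_pos hR
  calc ((2 * Real.pi)⁻¹ * ∫ θ : ℝ in (0)..2 * Real.pi, ‖h (circleMap ctr R θ)‖) * |R|⁻¹ ^ n
      ≤ ((2 * Real.pi)⁻¹ * (2 * Real.pi * M)) * |R|⁻¹ ^ n := by
        apply mul_le_mul_of_nonneg_right
        · apply mul_le_mul_of_nonneg_left (hint.trans_eq h2)
          positivity
        · positivity
    _ = M / R ^ n := by
        rw [hRabs, inv_mul_cancel_left₀ Real.two_pi_pos.ne', inv_pow]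
        ring

lemma norm_tCoeff_le {h : ℂ → ℂ} (hh : Differentiable ℂ h) {R M : ℝ} (hR : 0 < R)
    (hM : ∀ z : ℂ, z ∈ sphere (0:ℂ) R → ‖h z‖ ≤ M) (n : ℕ) :
    ‖tCoeff h n‖ ≤ M / R ^ n := by
  have hrad : cauchyPowerSeries h 0 R = cauchyPowerSeries h 0 1 := by
    have := cps_radius_indep hh (R := ⟨R, hR.le⟩) (by exact_mod_cast hR)
    exact this
  have h1 : tCoeff h n = cauchyPowerSeries h 0 R n (fun _ => 1) := by
    rw [hrad]; rfl
  rw [h1]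
  have hle : ‖cauchyPowerSeries h 0 R n (fun _ => (1:ℂ))‖
      ≤ ‖cauchyPowerSeries h 0 R n‖ := by
    have := (cauchyPowerSeries h 0 R n).le_opNorm (fun _ => (1:ℂ))
    simpa using this
  refine hle.trans (norm_cps_le hR ?_ hM n)
  exact (hh.continuous.comp (continuous_circleMap _ _))

lemma deriv_bound {h : ℂ → ℂ} (hh : Differentiable ℂ h) {b : ℂ} {M : ℝ}
    (hM : ∀ z ∈ sphere b 1, ‖h z‖ ≤ M) : ‖deriv h b‖ ≤ M := by
  have hp : HasFPowerSeriesAt h (cauchyPowerSeries h b 1) b :=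
    (hh.hasFPowerSeriesOnBall b one_pos).hasFPowerSeriesAt
  rw [hp.deriv]
  have hle : ‖(cauchyPowerSeries h b (1:ℝ)).coeff 1‖
      ≤ ‖cauchyPowerSeries h b (1:ℝ) 1‖ := by
    have h0 : (cauchyPowerSeries h b (1:ℝ)).coeff 1
        = cauchyPowerSeries h b (1:ℝ) 1 (fun _ => (1:ℂ)) := rfl
    rw [h0]
    have := (cauchyPowerSeries h b (1:ℝ) 1).le_opNorm (fun _ => (1:ℂ))
    simpa using this
  refine le_trans (by exact_mod_cast hle) ?_
  have := norm_cps_le (h := h) (ctr := b) one_pos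
    (hh.continuous.comp (continuous_circleMap _ _)) hM 1
  simpa using this

abbrev Mat := Matrix (Fin 2) (Fin 2) ℂ

def unip (t : ℂ) : Mat := !![1, t; 0, 1]
def s1 (a b : ℂ) : Mat := !![a, 0; b, a⁻¹]
def s2 (a b : ℂ) : Mat := !![a, -b⁻¹; b, 0]

lemma unip_eq (t : ℂ) : unip t = 1 + t • Hppm := by
  ext i j
  fin_cases i <;> fin_cases j <;>
    simp [unip, Hppm, Matrix.one_fin_two]

lemma Hppm_sq : Hppm * Hppm = 0 := by
  ext i j
  fin_cases i <;> fin_cases j <;>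
    simp [Hppm, Matrix.mul_apply, Fin.sum_univ_two]

lemma det_unip (t : ℂ) : (unip t).det = 1 := by
  simp [unip, Matrix.det_fin_two_of]

lemma s1_mem {a : ℂ} (ha : a ≠ 0) (b : ℂ) : s1 a b ∈ SL2 := by
  simp [SL2, s1, Matrix.det_fin_two_of, mul_inv_cancel₀ ha, Set.mem_setOf_eq]

lemma s2_mem (a : ℂ) {b : ℂ} (hb : b ≠ 0) : s2 a b ∈ SL2 := by
  simp [SL2, s2, Matrix.det_fin_two_of, inv_mul_cancel₀ hb, Set.mem_setOf_eq]

section Flow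
variable {f : Mat → ℂ} {Ω : Set Mat}

lemma flow (hΩ : IsOpen Ω) (hsub : SL2 ⊆ Ω) (hfd : DifferentiableOn ℂ f Ω)
    (heq : ∀ U ∈ SL2, lieD Hppm f U = 0) :
    ∀ V ∈ SL2, ∀ t : ℂ, f (V * unip t) = f V := by
  intro V hV t
  set W : Mat := V * Hppm with hW
  have hψ : ∀ s : ℂ, V * unip s = V + s • W := by
    intro s
    rw [unip_eq, mul_add, mul_one, Matrix.mul_smul]
  set φ : ℂ → ℂ := fun s => f (V + s • W) with hφ
  have hmem : ∀ s : ℂ, V + s • W ∈ SL2 := by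
    intro s
    have : (V * unip s).det = 1 := by
      rw [Matrix.det_mul, det_unip, hV, one_mul]
    rwa [hψ s] at this
  have hkey : ∀ s : ℂ, HasDerivAt φ 0 s := by
    intro s
    have hdf : DifferentiableAt ℂ f (V + s • W) :=
      hfd.differentiableAt (hΩ.mem_nhds (hsub (hmem s)))
    have hψd : HasDerivAt (fun s : ℂ => V + s • W) W s := by
      have := ((hasDerivAt_id s).smul_const W).const_add V
      simp only [id_eq, one_smul] at this
      exact this
    have h1 : HasDerivAt φ (fderiv ℂ f (V + s • W) W) s :=
      hdf.hasFDerivAt.comp_hasDerivAt s hψd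
    have h2 : (V + s • W) * Hppm = W := by
      rw [add_mul, Matrix.smul_mul, hW, Matrix.mul_assoc, Hppm_sq, Matrix.mul_zero,
        smul_zero, add_zero]
    have h3 : fderiv ℂ f (V + s • W) W = 0 := by
      have := heq _ (hmem s)
      rwa [lieD, h2] at this
    rwa [h3] at h1
  have hconst : φ t = φ 0 := by
    have hdiff : Differentiable ℂ φ := fun s => (hkey s).differentiableAt
    apply is_const_of_deriv_eq_zero hdiff
    intro s
    exact (hkey s).deriv
  have h0 : φ 0 = f V := by simp [hφ]
  rw [hψ t] at *
  rw [← h0, ← hconst]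

end Flow

def gg (f : Mat → ℂ) (p : ℂ × ℂ) : ℂ :=
  if p.1 = 0 then f (s2 p.1 p.2) else f (s1 p.1 p.2)

lemma gg_eq1 {f : Mat → ℂ} {p : ℂ × ℂ} (h : p.1 ≠ 0) :
    gg f p = f (s1 p.1 p.2) := if_neg h

lemma s1_diff {p : ℂ × ℂ} (h : p.1 ≠ 0) :
    DifferentiableAt ℂ (fun q : ℂ × ℂ => s1 q.1 q.2) p := by
  have hrep : (fun q : ℂ × ℂ => s1 q.1 q.2)
      = fun q : ℂ × ℂ => q.1 • (!![1,0;0,0] : Mat) + q.2 • (!![0,0;1,0] : Mat)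
        + q.1⁻¹ • (!![0,0;0,1] : Mat) := by
    funext q
    ext i j
    fin_cases i <;> fin_cases j <;> simp [s1]
  rw [hrep]
  exact ((differentiableAt_fst.smul_const _).add
    (differentiableAt_snd.smul_const _)).add
    ((differentiableAt_fst.inv h).smul_const _)

lemma s2_diff {p : ℂ × ℂ} (h : p.2 ≠ 0) :
    DifferentiableAt ℂ (fun q : ℂ × ℂ => s2 q.1 q.2) p := by
  have hrep : (fun q : ℂ × ℂ => s2 q.1 q.2)
      = fun q : ℂ × ℂ => q.1 • (!![1,0;0,0] : Mat) + q.2 • (!![0,0;1,0] : Mat)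
        + (-q.2⁻¹) • (!![0,1;0,0] : Mat) := by
    funext q
    ext i j
    fin_cases i <;> fin_cases j <;> simp [s2]
  rw [hrep]
  exact ((differentiableAt_fst.smul_const _).add
    (differentiableAt_snd.smul_const _)).add
    (((differentiableAt_snd.inv h).neg).smul_const _)

section GG
variable {f : Mat → ℂ} {Ω : Set Mat}
variable (hΩ : IsOpen Ω) (hsub : SL2 ⊆ Ω) (hfd : DifferentiableOn ℂ f Ω)
variable (heq : ∀ U ∈ SL2, lieD Hppm f U = 0)

include hΩ hsub hfd heq

lemma gg_eq2 {p : ℂ × ℂ} (h2 : p.2 ≠ 0) : gg f p = f (s2 p.1 p.2) := by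
  by_cases h1 : p.1 = 0
  · simp [gg, h1]
  · rw [gg_eq1 h1]
    have hid : s1 p.1 p.2 * unip (-(p.1 * p.2)⁻¹) = s2 p.1 p.2 := by
      ext i j
      fin_cases i <;> fin_cases j <;>
        simp [s1, s2, unip, Matrix.mul_apply, Fin.sum_univ_two] <;>
        field_simp <;> ring
    rw [← hid, flow hΩ hsub hfd heq _ (s1_mem h1 p.2)]

lemma f_eq_gg : ∀ U ∈ SL2, f U = gg f (U 0 0, U 1 0) := by
  intro U hU
  have hdet : U 0 0 * U 1 1 - U 0 1 * U 1 0 = 1 := by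
    have := hU
    simp only [SL2, Set.mem_setOf_eq, Matrix.det_fin_two] at this
    exact this
  by_cases h1 : U 0 0 = 0
  · have h2 : U 1 0 ≠ 0 := by
      intro h2
      rw [h1, h2] at hdet; simp at hdet
    have hid : s2 (U 0 0) (U 1 0) * unip (U 1 1 / U 1 0) = U := by
      ext i j
      fin_cases i <;> fin_cases j <;>
        simp [s2, unip, Matrix.mul_apply, Fin.sum_univ_two]
      · field_simp
        linear_combination hdet
      · field_simp
    rw [show gg f (U 0 0, U 1 0) = f (s2 (U 0 0) (U 1 0)) from by simp [gg, h1],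
      ← flow hΩ hsub hfd heq _ (s2_mem _ h2) (U 1 1 / U 1 0), hid]
  · have hid : s1 (U 0 0) (U 1 0) * unip (U 0 1 / U 0 0) = U := by
      ext i j
      fin_cases i <;> fin_cases j <;>
        simp [s1, unip, Matrix.mul_apply, Fin.sum_univ_two]
      · field_simp
      · field_simp
        linear_combination -hdet
    rw [gg_eq1 h1,
      ← flow hΩ hsub hfd heq _ (s1_mem h1 (U 1 0)) (U 0 1 / U 0 0), hid]

lemma gg_diff : ∀ p : ℂ × ℂ, p ≠ 0 → DifferentiableAt ℂ (gg f) p := by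
  intro p hp
  have hcases : p.1 ≠ 0 ∨ p.2 ≠ 0 := by
    by_contra hc
    push_neg at hc
    exact hp (Prod.ext hc.1 hc.2)
  rcases hcases with h | h
  · have hev : gg f =ᶠ[nhds p] fun q : ℂ × ℂ => f (s1 q.1 q.2) := by
      filter_upwards [(isOpen_compl_singleton.preimage continuous_fst).mem_nhds h]
        with q hq
      exact gg_eq1 hq
    have : DifferentiableAt ℂ (fun q : ℂ × ℂ => f (s1 q.1 q.2)) p :=
      (hfd.differentiableAt (hΩ.mem_nhds (hsub (s1_mem h p.2)))).comp p (s1_diff h)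
    exact this.congr_of_eventuallyEq hev
  · have hev : gg f =ᶠ[nhds p] fun q : ℂ × ℂ => f (s2 q.1 q.2) := by
      filter_upwards [(isOpen_compl_singleton.preimage continuous_snd).mem_nhds h]
        with q hq
      exact gg_eq2 hΩ hsub hfd heq hq
    have : DifferentiableAt ℂ (fun q : ℂ × ℂ => f (s2 q.1 q.2)) p :=
      (hfd.differentiableAt (hΩ.mem_nhds (hsub (s2_mem p.1 h)))).comp p (s2_diff h)
    exact this.congr_of_eventuallyEq hev

end GG

/-! ### Slices and coefficient functions -/

def KK (n : ℕ) (θ : ℝ) : ℂ :=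
  (circleMap 0 1 θ * I) * ((circleMap 0 1 θ)⁻¹ ^ n * (circleMap 0 1 θ)⁻¹)

lemma circleMap_ne_zero' (θ : ℝ) : circleMap 0 1 θ ≠ 0 :=
  circleMap_ne_center one_ne_zero

lemma norm_KK (n : ℕ) (θ : ℝ) : ‖KK n θ‖ = 1 := by
  simp [KK, norm_mul, norm_pow, norm_inv, norm_circleMap_zero]

lemma KK_continuous (n : ℕ) : Continuous (KK n) := by
  have h1 : Continuous fun θ => circleMap 0 1 θ := continuous_circleMap 0 1
  have h2 : Continuous fun θ => (circleMap 0 1 θ)⁻¹ :=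
    h1.inv₀ fun θ => circleMap_ne_zero' θ
  exact (h1.mul continuous_const).mul ((h2.pow n).mul h2)

lemma tCoeff_repr (h : ℂ → ℂ) (n : ℕ) :
    tCoeff h n = (2 * Real.pi * I)⁻¹
      * ∫ θ in (0:ℝ)..2 * Real.pi, KK n θ * h (circleMap 0 1 θ) := by
  unfold tCoeff
  simp only [cauchyPowerSeries, ContinuousMultilinearMap.mkPiRing_apply, Finset.prod_const,
    one_pow, one_smul, one_mul, circleIntegral, deriv_circleMap, sub_zero, smul_eq_mul]
  congr 1
  apply intervalIntegral.integral_congr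
  intro θ _
  unfold KK
  dsimp only
  ring

lemma tCoeff_congr {h₁ h₂ : ℂ → ℂ} (hcongr : ∀ z : ℂ, z ≠ 0 → h₁ z = h₂ z) (n : ℕ) :
    tCoeff h₁ n = tCoeff h₂ n := by
  rw [tCoeff_repr, tCoeff_repr]
  congr 1
  apply intervalIntegral.integral_congr
  intro θ _
  dsimp only
  rw [hcongr _ (circleMap_ne_zero' θ)]

def PP (f : Mat → ℂ) (n : ℕ) (b : ℂ) : ℂ := tCoeff (fun a => gg f (a, b)) n

section Slices
variable {f : Mat → ℂ} {Ω : Set Mat}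
variable (hΩ : IsOpen Ω) (hsub : SL2 ⊆ Ω) (hfd : DifferentiableOn ℂ f Ω)
variable (heq : ∀ U ∈ SL2, lieD Hppm f U = 0)

include hΩ hsub hfd heq

lemma slice1_diff {b : ℂ} (hb : b ≠ 0) : Differentiable ℂ (fun a => gg f (a, b)) := by
  intro a
  exact (gg_diff hΩ hsub hfd heq (a, b) (by simp [Prod.ext_iff, hb])).comp a
    (differentiableAt_id.prodMk (differentiableAt_const b) :
      DifferentiableAt ℂ (fun a : ℂ => (a, b)) a)

lemma slice2_diff {w : ℂ} (hw : w ≠ 0) : Differentiable ℂ (fun b => gg f (w, b)) := by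
  intro b
  exact (gg_diff hΩ hsub hfd heq (w, b) (by simp [Prod.ext_iff, hw])).comp b
    ((differentiableAt_const w).prodMk differentiableAt_id)

lemma gg_sup {K : Set (ℂ × ℂ)} (hK : IsCompact K) (h0 : (0 : ℂ × ℂ) ∉ K) :
    ∃ M : ℝ, ∀ p ∈ K, ‖gg f p‖ ≤ M := by
  apply hK.exists_bound_of_continuousOn
  intro p hp
  exact (gg_diff hΩ hsub hfd heq p (fun h => h0 (h ▸ hp))).continuousAt.continuousWithinAt

lemma PP_hasSum {b : ℂ} (hb : b ≠ 0) (a : ℂ) :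
    HasSum (fun n => PP f n b * a ^ n) (gg f (a, b)) :=
  entire_hasSum (slice1_diff hΩ hsub hfd heq hb) a

lemma PP_bound {R M : ℝ} (hR : 0 < R) {b : ℂ} (hb : b ≠ 0)
    (hM : ∀ w ∈ sphere (0:ℂ) R, ‖gg f (w, b)‖ ≤ M) (n : ℕ) :
    ‖PP f n b‖ ≤ M / R ^ n :=
  norm_tCoeff_le (slice1_diff hΩ hsub hfd heq hb) hR hM n

lemma PP_diff (n : ℕ) : Differentiable ℂ (PP f n) := by
  intro b₀
  -- compact bound for gg on sphere × closedBall b₀ 2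
  obtain ⟨M, hM⟩ := gg_sup hΩ hsub hfd heq (K := sphere (0:ℂ) 1 ×ˢ closedBall b₀ 2)
    ((isCompact_sphere _ _).prod (isCompact_closedBall _ _))
    (by
      intro h0
      have : (0:ℂ) ∈ sphere (0:ℂ) 1 := h0.1
      simp at this)
  set F : ℂ → ℝ → ℂ := fun b θ => KK n θ * gg f (circleMap 0 1 θ, b) with hF
  set F' : ℂ → ℝ → ℂ :=
    fun b θ => KK n θ * fderiv ℂ (gg f) (circleMap 0 1 θ, b) (0, 1) with hF'
  have hne : ∀ (θ : ℝ) (b : ℂ), (circleMap 0 1 θ, b) ≠ (0 : ℂ × ℂ) := fun θ b => by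
    simp [Prod.ext_iff, circleMap_ne_zero' θ]
  have hFcont : ∀ b : ℂ, Continuous fun θ => F b θ := by
    intro b
    apply (KK_continuous n).mul
    rw [continuous_iff_continuousAt]
    intro θ
    have hc : Continuous fun θ : ℝ => (circleMap 0 1 θ, b) :=
      (continuous_circleMap 0 1).prodMk continuous_const
    exact ContinuousAt.comp (x := θ)
      ((gg_diff hΩ hsub hfd heq _ (hne θ b)).continuousAt) hc.continuousAt
  have hslice : ∀ (θ : ℝ) (b : ℂ),
      HasDerivAt (fun z => gg f (circleMap 0 1 θ, z))
        (fderiv ℂ (gg f) (circleMap 0 1 θ, b) (0, 1)) b := by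
    intro θ b
    exact ((gg_diff hΩ hsub hfd heq _ (hne θ b)).hasFDerivAt).comp_hasDerivAt b
      ((hasDerivAt_const b (circleMap 0 1 θ)).prodMk (hasDerivAt_id b))
  have key := intervalIntegral.hasDerivAt_integral_of_dominated_loc_of_deriv_le
    (F := F) (F' := F') (x₀ := b₀) (a := 0) (b := 2 * Real.pi) (μ := MeasureTheory.volume)
    (bound := fun _ => M) (ball_mem_nhds b₀ one_pos)
    (Filter.Eventually.of_forall fun b => (hFcont b).aestronglyMeasurable)
    ((hFcont b₀).intervalIntegrable _ _)
    ?meas ?bnd (intervalIntegrable_const) ?diff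
  case meas =>
    apply Measurable.aestronglyMeasurable
    apply ((KK_continuous n).measurable).mul
    exact (measurable_fderiv_apply_const ℂ (gg f) ((0:ℂ), (1:ℂ))).comp
      (((continuous_circleMap 0 1).prodMk continuous_const).measurable)
  case bnd =>
    apply MeasureTheory.ae_of_all
    intro θ _ b hb
    have hd : deriv (fun z => gg f (circleMap 0 1 θ, z)) b
        = fderiv ℂ (gg f) (circleMap 0 1 θ, b) (0, 1) := (hslice θ b).deriv
    have hbound : ‖fderiv ℂ (gg f) (circleMap 0 1 θ, b) (0, 1)‖ ≤ M := by
      rw [← hd]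
      apply deriv_bound (slice2_diff hΩ hsub hfd heq (circleMap_ne_zero' θ))
      intro z hz
      apply hM
      constructor
      · exact circleMap_mem_sphere 0 one_pos.le θ
      · have h1 : dist z b₀ ≤ dist z b + dist b b₀ := dist_triangle _ _ _
        have h2 : dist z b = 1 := mem_sphere.1 hz
        have h3 : dist b b₀ < 1 := mem_ball.1 hb
        simp only [mem_closedBall]
        linarith
    calc ‖F' b θ‖ = ‖KK n θ‖ * ‖fderiv ℂ (gg f) (circleMap 0 1 θ, b) (0, 1)‖ :=
        norm_mul _ _
      _ ≤ 1 * M := by rw [norm_KK]; simpa using hbound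
      _ = M := one_mul M
  case diff =>
    apply MeasureTheory.ae_of_all
    intro θ _ b _
    exact (hslice θ b).const_mul (KK n θ)
  obtain ⟨-, hD⟩ := key
  have hrepr : PP f n = fun b => (2 * Real.pi * I)⁻¹ * ∫ θ in (0:ℝ)..2 * Real.pi, F b θ := by
    funext b
    exact tCoeff_repr _ n
  rw [hrepr]
  exact (hD.differentiableAt).const_mul _

end Slices

section ZeroSlice
variable {f : Mat → ℂ} {Ω : Set Mat}
variable (hΩ : IsOpen Ω) (hsub : SL2 ⊆ Ω) (hfd : DifferentiableOn ℂ f Ω)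
variable (heq : ∀ U ∈ SL2, lieD Hppm f U = 0)

include hΩ hsub hfd heq

lemma PP_zero_hasSum {a : ℂ} (ha : a ≠ 0) :
    HasSum (fun n => PP f n 0 * a ^ n) (gg f (a, 0)) := by
  obtain ⟨M, hM⟩ := gg_sup hΩ hsub hfd heq
    (K := sphere (0:ℂ) 1 ×ˢ closedBall (0:ℂ) 1)
    ((isCompact_sphere _ _).prod (isCompact_closedBall _ _))
    (by
      intro h0
      have : (0:ℂ) ∈ sphere (0:ℂ) 1 := h0.1
      simp at this)
  set sl : ℂ → ℂ := fun z => gg f (z, 0) with hsl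
  have hslD : ∀ z : ℂ, z ≠ 0 → DifferentiableAt ℂ sl z := by
    intro z hz
    exact (gg_diff hΩ hsub hfd heq (z, 0) (by simp [Prod.ext_iff, hz])).comp z
      (differentiableAt_id.prodMk (differentiableAt_const (0:ℂ)) :
        DifferentiableAt ℂ (fun z : ℂ => (z, (0:ℂ))) z)
  -- boundedness near zero, via the maximum principle in the first variable
  have hslb : ∀ z : ℂ, z ≠ 0 → z ∈ ball (0:ℂ) 1 → ‖sl z‖ ≤ M := by
    intro z hz hzball
    have hcont : ContinuousAt (fun b => gg f (z, b)) 0 :=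
      ((slice2_diff hΩ hsub hfd heq hz) 0).continuousAt
    have hev : ∀ᶠ b in nhdsWithin (0:ℂ) {(0:ℂ)}ᶜ, ‖gg f (z, b)‖ ≤ M := by
      filter_upwards [self_mem_nhdsWithin,
        eventually_nhdsWithin_of_eventually_nhds
          ((Filter.eventually_mem_set.2 (Metric.closedBall_mem_nhds (0:ℂ) one_pos)))]
        with b hb1 hb2
      have hb1' : b ≠ 0 := hb1
      apply Complex.norm_le_of_forall_mem_frontier_norm_le (U := ball (0:ℂ) 1)
        isBounded_ball
        ((slice1_diff hΩ hsub hfd heq hb1').diffContOnCl)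
        ?_ (subset_closure hzball)
      intro w hw
      rw [frontier_ball (0:ℂ) one_ne_zero] at hw
      exact hM (w, b) ⟨hw, hb2⟩
    have ht : Filter.Tendsto (fun b => ‖gg f (z, b)‖) (nhdsWithin (0:ℂ) {(0:ℂ)}ᶜ)
        (nhds ‖sl z‖) :=
      (hcont.norm.tendsto).mono_left nhdsWithin_le_nhds
    exact le_of_tendsto ht hev
  set L := Filter.limUnder (nhdsWithin (0:ℂ) {(0:ℂ)}ᶜ) sl with hL
  set h₀ := Function.update sl 0 L with hh0def
  have hupd : DifferentiableOn ℂ h₀ (ball (0:ℂ) 1) := by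
    apply Complex.differentiableOn_update_limUnder_of_bddAbove
      (ball_mem_nhds (0:ℂ) one_pos)
    · intro z hz
      exact (hslD z (by simpa using hz.2)).differentiableWithinAt
    · refine ⟨M, ?_⟩
      rintro x ⟨z, ⟨hz1, hz2⟩, rfl⟩
      exact hslb z (by simpa using hz2) hz1
  have hh₀ : Differentiable ℂ h₀ := by
    intro z
    by_cases hz : z = 0
    · subst hz
      exact hupd.differentiableAt (isOpen_ball.mem_nhds (by simp))
    · apply (hslD z hz).congr_of_eventuallyEq
      filter_upwards [isOpen_compl_singleton.mem_nhds hz] with w hw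
      exact Function.update_of_ne hw _ _
  have hcoeff : ∀ n, tCoeff h₀ n = PP f n 0 := by
    intro n
    exact tCoeff_congr (fun z hz => Function.update_of_ne hz _ _) n
  have hsum := entire_hasSum hh₀ a
  have h₀a : h₀ a = gg f (a, 0) := Function.update_of_ne ha _ _
  rw [h₀a] at hsum
  exact HasSum.congr_fun hsum fun n => by rw [hcoeff n]

end ZeroSlice

section Main
variable {f : Mat → ℂ} {Ω : Set Mat}
variable (hΩ : IsOpen Ω) (hsub : SL2 ⊆ Ω) (hfd : DifferentiableOn ℂ f Ω)
variable (heq : ∀ U ∈ SL2, lieD Hppm f U = 0)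

include hΩ hsub hfd heq

lemma cBound {R' R : ℝ} (hR' : 0 < R') (hR : 0 < R) :
    ∃ C : ℝ, 0 ≤ C ∧ ∀ n m : ℕ, ‖tCoeff (PP f n) m‖ ≤ C / (R' ^ n * R ^ m) := by
  obtain ⟨M, hM⟩ := gg_sup hΩ hsub hfd heq (K := sphere (0:ℂ) R' ×ˢ sphere (0:ℂ) R)
    ((isCompact_sphere _ _).prod (isCompact_sphere _ _))
    (by
      intro h0
      have h1 : (0:ℂ) ∈ sphere (0:ℂ) R' := h0.1
      rw [mem_sphere, dist_self] at h1
      exact hR'.ne h1)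
  refine ⟨max M 0, le_max_right _ _, ?_⟩
  intro n m
  have hPP : ∀ b ∈ sphere (0:ℂ) R, ‖PP f n b‖ ≤ max M 0 / R' ^ n := by
    intro b hb
    have hb0 : b ≠ 0 := by
      intro h
      rw [h, mem_sphere, dist_self] at hb
      exact hR.ne hb
    exact PP_bound hΩ hsub hfd heq hR' hb0
      (fun w hw => (hM (w, b) ⟨hw, hb⟩).trans (le_max_left _ _)) n
  have h2 := norm_tCoeff_le (PP_diff hΩ hsub hfd heq n) hR hPP m
  calc ‖tCoeff (PP f n) m‖ ≤ max M 0 / R' ^ n / R ^ m := h2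
    _ = max M 0 / (R' ^ n * R ^ m) := div_div _ _ _

lemma normBound (a b : ℂ) :
    Summable fun nm : ℕ × ℕ => ‖tCoeff (PP f nm.1) nm.2 * a ^ nm.1 * b ^ nm.2‖ := by
  set R' : ℝ := ‖a‖ + 1 with hR'def
  set R : ℝ := ‖b‖ + 1 with hRdef
  have hR' : 0 < R' := by positivity
  have hR : 0 < R := by positivity
  obtain ⟨C, hC0, hC⟩ := cBound hΩ hsub hfd heq hR' hR
  set q1 : ℝ := ‖a‖ / R' with hq1def
  set q2 : ℝ := ‖b‖ / R with hq2def
  have hq1 : 0 ≤ q1 := by positivity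
  have hq2 : 0 ≤ q2 := by positivity
  have hq1' : q1 < 1 := by
    rw [hq1def, div_lt_one hR']
    exact lt_add_one _
  have hq2' : q2 < 1 := by
    rw [hq2def, div_lt_one hR]
    exact lt_add_one _
  have hmaj : Summable fun nm : ℕ × ℕ => C * (q1 ^ nm.1 * q2 ^ nm.2) :=
    (((summable_geometric_of_lt_one hq1 hq1').mul_of_nonneg
      (summable_geometric_of_lt_one hq2 hq2')
      (fun n => pow_nonneg hq1 _) (fun m => pow_nonneg hq2 _))).mul_left C
  apply Summable.of_nonneg_of_le (fun _ => norm_nonneg _) ?_ hmaj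
  intro nm
  have h1 := hC nm.1 nm.2
  have hnorm : ‖tCoeff (PP f nm.1) nm.2 * a ^ nm.1 * b ^ nm.2‖
      = ‖tCoeff (PP f nm.1) nm.2‖ * ‖a‖ ^ nm.1 * ‖b‖ ^ nm.2 := by
    simp [norm_mul, norm_pow]
  rw [hnorm]
  have step : ‖tCoeff (PP f nm.1) nm.2‖ * ‖a‖ ^ nm.1 * ‖b‖ ^ nm.2
      ≤ C / (R' ^ nm.1 * R ^ nm.2) * ‖a‖ ^ nm.1 * ‖b‖ ^ nm.2 := by
    apply mul_le_mul_of_nonneg_right _ (by positivity)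
    exact mul_le_mul_of_nonneg_right h1 (by positivity)
  refine step.trans (le_of_eq ?_)
  rw [hq1def, hq2def, div_pow, div_pow]
  have hR'0 : (R' : ℝ) ^ nm.1 ≠ 0 := by positivity
  have hR0 : (R : ℝ) ^ nm.2 ≠ 0 := by positivity
  field_simp

lemma main_hasSum {a b : ℂ} (hab : ¬(a = 0 ∧ b = 0)) :
    HasSum (fun nm : ℕ × ℕ => tCoeff (PP f nm.1) nm.2 * a ^ nm.1 * b ^ nm.2)
      (gg f (a, b)) := by
  have hs : Summable fun nm : ℕ × ℕ => tCoeff (PP f nm.1) nm.2 * a ^ nm.1 * b ^ nm.2 :=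
    (normBound hΩ hsub hfd heq a b).of_norm
  have inner : ∀ n : ℕ,
      HasSum (fun m => tCoeff (PP f n) m * a ^ n * b ^ m) (PP f n b * a ^ n) := by
    intro n
    have h := (entire_hasSum (PP_diff hΩ hsub hfd heq n) b).mul_right (a ^ n)
    exact HasSum.congr_fun h fun m => by ring
  have outer : HasSum (fun n => PP f n b * a ^ n) (gg f (a, b)) := by
    by_cases hb : b = 0
    · subst hb
      exact PP_zero_hasSum hΩ hsub hfd heq (fun h => hab ⟨h, rfl⟩)
    · exact PP_hasSum hΩ hsub hfd heq hb a
  have h1 := hs.hasSum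
  have h2 := HasSum.prod_fiberwise h1 inner
  rwa [h2.unique outer] at h1

end Main

/- STATEMENT 7: If f is holomorphic on SL₂(ℂ) and H₊₊·f = 0, then f is the restriction
of an everywhere-convergent power series Σ_{n,m ≥ 0} c_{nm} (u¹₊)ⁿ (u²₊)^m in the entries
of the first column of U: f depends only (and holomorphically) on the first column. -/
theorem stmt_7 (f : Matrix (Fin 2) (Fin 2) ℂ → ℂ) (hf : HolSL2 f)
    (heq : ∀ U ∈ SL2, lieD Hppm f U = 0) :
    ∃ c : ℕ × ℕ → ℂ,
      (∀ a b : ℂ, Summable fun nm : ℕ × ℕ => c nm * a ^ nm.1 * b ^ nm.2) ∧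
      ∀ U ∈ SL2,
        HasSum (fun nm : ℕ × ℕ => c nm * U 0 0 ^ nm.1 * U 1 0 ^ nm.2) (f U) := by
  obtain ⟨Ω, hΩ, hsub, hfd⟩ := hf
  refine ⟨fun nm => tCoeff (PP f nm.1) nm.2,
    fun a b => (normBound hΩ hsub hfd heq a b).of_norm, ?_⟩
  intro U hU
  have hdet : U 0 0 * U 1 1 - U 0 1 * U 1 0 = 1 := by
    have h := hU
    simp only [SL2, Set.mem_setOf_eq, Matrix.det_fin_two] at h
    exact h
  have hab : ¬(U 0 0 = 0 ∧ U 1 0 = 0) := by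
    rintro ⟨h1, h2⟩
    rw [h1, h2] at hdet
    simp at hdet
  have h := main_hasSum hΩ hsub hfd heq hab
  rwa [← f_eq_gg hΩ hsub hfd heq U hU] at h
end
end

section
/- On the manifold N = SL_2(C) × V × C^{4n} (with V ⊂ C^{4n} open), let ĤF be a holomorphic map ĤF(U,z,w) = F(U,w) with H0 · F = 2F, and define vector fields Ĥ0 and Ĥ++ lifting H0 and H++ with ∂/∂w-components 0 and F^{ia}(U,w) ∂/∂w^{ia} respectively. Then [Ĥ0, Ĥ++] = 2 Ĥ++, so the distribution spanned by Ĥ0 and Ĥ++ is involutive. -/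
open Matrix

noncomputable section

attribute [local instance] Matrix.normedAddCommGroup Matrix.normedSpace

/-- ℂ^{4n}, indexed by pairs (i,a), i = 1,2, a = 1,…,2n (as in z^{ia}, w^{ia}). -/
abbrev W4 (n : ℕ) := Fin 2 × Fin (2 * n) → ℂ

/-- Lie bracket of vector fields on a normed space. -/
def VBr {E : Type*} [NormedAddCommGroup E] [NormedSpace ℂ E] (X Y : E → E) (x : E) : E :=
  fderiv ℂ Y x (X x) - fderiv ℂ X x (Y x)

/-- The lift Ĥ₀ of H₀ to N = SL₂(ℂ) × V × ℂ^{4n} (zero ∂/∂z- and ∂/∂w-components). -/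
def hatH0 (n : ℕ) (x : Matrix (Fin 2) (Fin 2) ℂ × W4 n × W4 n) :
    Matrix (Fin 2) (Fin 2) ℂ × W4 n × W4 n := (x.1 * H0m, 0, 0)

/-- The lift Ĥ₊₊, with ∂/∂w-component F^{ia}(U,w) ∂/∂w^{ia}. -/
def hatHpp (n : ℕ) (F : Matrix (Fin 2) (Fin 2) ℂ × W4 n → W4 n)
    (x : Matrix (Fin 2) (Fin 2) ℂ × W4 n × W4 n) :
    Matrix (Fin 2) (Fin 2) ℂ × W4 n × W4 n := (x.1 * Hppm, 0, F (x.1, x.2.2))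

/- STATEMENT 12: On N = SL₂(ℂ) × V × ℂ^{4n}, if F is holomorphic with charge 2
(H₀·F = 2F in the U-variable), then the lifted fields satisfy [Ĥ₀, Ĥ₊₊] = 2 Ĥ₊₊,
so the distribution spanned by Ĥ₀ and Ĥ₊₊ is involutive. -/
theorem stmt_12 (n : ℕ) (V : Set (W4 n)) (hV : IsOpen V)
    (F : Matrix (Fin 2) (Fin 2) ℂ × W4 n → W4 n) (hF : Differentiable ℂ F)
    (hcharge : ∀ (U : Matrix (Fin 2) (Fin 2) ℂ) (w : W4 n), U.det = 1 →
      fderiv ℂ F (U, w) (U * H0m, 0) = (2 : ℂ) • F (U, w)) :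
    ∀ x : Matrix (Fin 2) (Fin 2) ℂ × W4 n × W4 n, x.1.det = 1 → x.2.1 ∈ V →
      VBr (hatH0 n) (hatHpp n F) x = (2 : ℂ) • hatHpp n F x := by
  classical
  rintro ⟨U, z, w⟩ hdet -
  -- right-multiplication CLMs
  let R0 : Matrix (Fin 2) (Fin 2) ℂ →L[ℂ] Matrix (Fin 2) (Fin 2) ℂ :=
    LinearMap.toContinuousLinearMap (LinearMap.mulRight ℂ H0m)
  let Rp : Matrix (Fin 2) (Fin 2) ℂ →L[ℂ] Matrix (Fin 2) (Fin 2) ℂ :=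
    LinearMap.toContinuousLinearMap (LinearMap.mulRight ℂ Hppm)
  let fst1 := ContinuousLinearMap.fst ℂ (Matrix (Fin 2) (Fin 2) ℂ) (W4 n × W4 n)
  let g : (Matrix (Fin 2) (Fin 2) ℂ × W4 n × W4 n) →L[ℂ]
      (Matrix (Fin 2) (Fin 2) ℂ × W4 n) :=
    fst1.prod ((ContinuousLinearMap.snd ℂ (W4 n) (W4 n)).comp
      (ContinuousLinearMap.snd ℂ (Matrix (Fin 2) (Fin 2) ℂ) (W4 n × W4 n)))
  set x : Matrix (Fin 2) (Fin 2) ℂ × W4 n × W4 n := (U, z, w) with hx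
  have hgx : g x = (U, w) := rfl
  -- derivative of hatH0
  have h0 : HasFDerivAt (hatH0 n)
      ((R0.comp fst1).prod (0 : _ →L[ℂ] (W4 n × W4 n))) x := by
    have := ((R0.comp fst1).prod (0 : _ →L[ℂ] (W4 n × W4 n))).hasFDerivAt (x := x)
    convert this using 1
    rfl
  -- derivative of hatHpp
  have h1 : HasFDerivAt (fun y : Matrix (Fin 2) (Fin 2) ℂ × W4 n × W4 n => y.1 * Hppm)
      (Rp.comp fst1) x := (Rp.comp fst1).hasFDerivAt
  have h2 : HasFDerivAt (fun _ : Matrix (Fin 2) (Fin 2) ℂ × W4 n × W4 n => (0 : W4 n))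
      (0 : _ →L[ℂ] W4 n) x := hasFDerivAt_const _ _
  have h3 : HasFDerivAt (fun y : Matrix (Fin 2) (Fin 2) ℂ × W4 n × W4 n => F (g y))
      ((fderiv ℂ F (g x)).comp g) x :=
    ((hF (g x)).hasFDerivAt).comp x g.hasFDerivAt
  have hpp : HasFDerivAt (hatHpp n F)
      ((Rp.comp fst1).prod
        ((0 : _ →L[ℂ] W4 n).prod ((fderiv ℂ F (g x)).comp g))) x := by
    have := h1.prodMk (h2.prodMk h3)
    exact this
  -- matrix identities
  have hm1 : H0m * Hppm = Hppm := by
    ext i j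
    fin_cases i <;> fin_cases j <;>
      simp [H0m, Hppm, Matrix.mul_apply, Fin.sum_univ_two]
  have hm2 : Hppm * H0m = -Hppm := by
    ext i j
    fin_cases i <;> fin_cases j <;>
      simp [H0m, Hppm, Matrix.mul_apply, Fin.sum_univ_two]
  -- compute the bracket
  erw [VBr, h0.fderiv, hpp.fderiv]
  have hH0x : hatH0 n x = (U * H0m, 0, 0) := rfl
  have hHppx : hatHpp n F x = (U * Hppm, 0, F (U, w)) := rfl
  rw [hH0x, hHppx]
  have hg1 : g (U * H0m, 0, 0) = (U * H0m, 0) := rfl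
  have key := hcharge U w hdet
  refine Prod.ext ?_ (Prod.ext ?_ ?_)
  · show (U * H0m) * Hppm - (U * Hppm) * H0m = (2 : ℂ) • (U * Hppm)
    rw [Matrix.mul_assoc, Matrix.mul_assoc, hm1, hm2, Matrix.mul_neg, sub_neg_eq_add,
      two_smul]
  · show (0 : W4 n) - 0 = (2 : ℂ) • (0 : W4 n)
    simp
  · show fderiv ℂ F (g x) (g (U * H0m, 0, 0)) - 0 = (2 : ℂ) • F (U, w)
    rw [hg1, hgx, sub_zero, key]
end
end

section
/- Suppose h : SL_2(C) × V → C^{4n} is holomorphic, satisfies H0·h = 0, H++·h|_{(U,z)} = F(U, h(U,z)) with H0·F = 2F, and satisfies the symmetry h(U,z) = h(ψ(U),z) where ψ(U) = (U^T)^{-1}. Then h automatically satisfies the third equation H--·h|_{(U,z)} = -F(ψ(U), h(ψ(U), z)). -/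
open Matrix

noncomputable section

attribute [local instance] Matrix.normedAddCommGroup Matrix.normedSpace

/-- ψ(U) = (Uᵀ)⁻¹. -/
def psiMap (U : Matrix (Fin 2) (Fin 2) ℂ) : Matrix (Fin 2) (Fin 2) ℂ := (Uᵀ)⁻¹

/- STATEMENT 14: If h : SL₂(ℂ) × V → ℂ^{4n} is holomorphic, satisfies H₀·h = 0 and
H₊₊·h|_{(U,z)} = F(U, h(U,z)) with H₀·F = 2F, and the symmetry h(U,z) = h(ψ(U),z),
then h automatically satisfies H₋₋·h|_{(U,z)} = -F(ψ(U), h(ψ(U),z)). -/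

lemma Hmmm_transpose : Hmmmᵀ = Hppm := by
  ext i j; fin_cases i <;> fin_cases j <;> simp [Hmmm, Hppm]

lemma det_one_add_smul_Hmmm (t : ℂ) : (1 + t • Hmmm).det = 1 := by
  simp [Matrix.det_fin_two, Matrix.add_apply, Matrix.smul_apply, Matrix.one_apply, Hmmm]

lemma inv_one_add_smul_Hppm (t : ℂ) : (1 + t • Hppm)⁻¹ = 1 - t • Hppm := by
  apply Matrix.inv_eq_right_inv
  have : Hppm * Hppm = 0 := by
    ext i j; fin_cases i <;> fin_cases j <;> simp [Hppm, Matrix.mul_apply, Fin.sum_univ_two]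
  rw [add_mul, one_mul, mul_sub, mul_one, Matrix.smul_mul, Matrix.mul_smul, this]
  simp

lemma psi_curve (U : Matrix (Fin 2) (Fin 2) ℂ) (t : ℂ) :
    psiMap (U * (1 + t • Hmmm)) = psiMap U - t • (psiMap U * Hppm) := by
  rw [psiMap, psiMap, Matrix.transpose_mul, Matrix.mul_inv_rev, Matrix.transpose_add,
    Matrix.transpose_one, Matrix.transpose_smul, Hmmm_transpose, inv_one_add_smul_Hppm,
    mul_sub, mul_one, Matrix.mul_smul]

theorem stmt_14 (n : ℕ)
    (h : Matrix (Fin 2) (Fin 2) ℂ × W4 n → W4 n) (hh : Differentiable ℂ h)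
    (F : Matrix (Fin 2) (Fin 2) ℂ × W4 n → W4 n) (hF : Differentiable ℂ F)
    (hFcharge : ∀ (U : Matrix (Fin 2) (Fin 2) ℂ) (w : W4 n), U.det = 1 →
      fderiv ℂ F (U, w) (U * H0m, 0) = (2 : ℂ) • F (U, w))
    (hH0 : ∀ (U : Matrix (Fin 2) (Fin 2) ℂ) (z : W4 n), U.det = 1 →
      fderiv ℂ h (U, z) (U * H0m, 0) = 0)
    (hHpp : ∀ (U : Matrix (Fin 2) (Fin 2) ℂ) (z : W4 n), U.det = 1 →
      fderiv ℂ h (U, z) (U * Hppm, 0) = F (U, h (U, z)))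
    (hsym : ∀ (U : Matrix (Fin 2) (Fin 2) ℂ) (z : W4 n), U.det = 1 →
      h (U, z) = h (psiMap U, z)) :
    ∀ (U : Matrix (Fin 2) (Fin 2) ℂ) (z : W4 n), U.det = 1 →
      fderiv ℂ h (U, z) (U * Hmmm, 0) = -F (psiMap U, h (psiMap U, z)) := by
  intro U z hU
  have hdetpsi : (psiMap U).det = 1 := by
    rw [psiMap, Matrix.det_nonsing_inv, Matrix.det_transpose, hU]
    simp
  -- curves
  set V := psiMap U with hV
  -- pointwise equality of the two curves composed with h
  have key : ∀ t : ℂ, h (U + t • (U * Hmmm), z) = h (V - t • (V * Hppm), z) := by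
    intro t
    have h1 : U + t • (U * Hmmm) = U * (1 + t • Hmmm) := by
      rw [mul_add, mul_one, Matrix.mul_smul]
    have hdet : (U * (1 + t • Hmmm)).det = 1 := by
      rw [Matrix.det_mul, hU, det_one_add_smul_Hmmm, one_mul]
    rw [h1, hsym _ z hdet, psi_curve]
  -- derivative of LHS curve
  have hg1 : HasDerivAt (fun t : ℂ => h (U + t • (U * Hmmm), z))
      (fderiv ℂ h (U, z) (U * Hmmm, 0)) 0 := by
    have hc : HasDerivAt (fun t : ℂ => (U + t • (U * Hmmm), z))
        ((U * Hmmm, 0) : Matrix (Fin 2) (Fin 2) ℂ × W4 n) 0 := by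
      have := HasDerivAt.prodMk (((hasDerivAt_id (0:ℂ)).smul_const (U * Hmmm)).const_add U)
        (hasDerivAt_const 0 z)
      simp at this
      exact this
    have hf : HasFDerivAt h (fderiv ℂ h (U, z)) (U + (0:ℂ) • (U * Hmmm), z) := by
      simpa using (hh (U, z)).hasFDerivAt
    have := hf.comp_hasDerivAt 0 hc
    exact this
  have hg2 : HasDerivAt (fun t : ℂ => h (V - t • (V * Hppm), z))
      (-fderiv ℂ h (V, z) (V * Hppm, 0)) 0 := by
    have hc : HasDerivAt (fun t : ℂ => (V - t • (V * Hppm), z))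
        ((-(V * Hppm), 0) : Matrix (Fin 2) (Fin 2) ℂ × W4 n) 0 := by
      have := HasDerivAt.prodMk (((hasDerivAt_id (0:ℂ)).smul_const (V * Hppm)).const_sub V)
        (hasDerivAt_const 0 z)
      simp at this
      exact this
    have hf : HasFDerivAt h (fderiv ℂ h (V, z)) (V - (0:ℂ) • (V * Hppm), z) := by
      simpa using (hh (V, z)).hasFDerivAt
    have := hf.comp_hasDerivAt 0 hc
    have heq : (fderiv ℂ h (V, z)) (-(V * Hppm), 0) = -fderiv ℂ h (V, z) (V * Hppm, 0) := by
      rw [show ((-(V * Hppm), (0 : W4 n))) = -((V * Hppm, 0)) by simp [Prod.ext_iff], map_neg]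
    exact this.congr_deriv heq
  have : fderiv ℂ h (U, z) (U * Hmmm, 0) = -fderiv ℂ h (V, z) (V * Hppm, 0) := by
    have := hg1.unique (by simpa only [key] using hg2)
    exact this
  rw [this, hHpp V z hdetpsi]
end
end
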